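/- Let Q^1,…,Q^N be probability measures on (Ω, 𝓕) absolutely continuous with respect to P, let ℒ^1,…,ℒ^N be vector subspaces of random variables with ℝ ⊆ ℒ^n ⊆ L^1(Q^n), let u_1,…,u_N : ℝ → ℝ be Borel measurable, A ∈ ℝ, and let X^1,…,X^N be random variables such that u_n(X^n + c) is P-integrable for every constant c ∈ ℝ and every n. Define, with suprema taken in ℝ ∪ {±∞}: Π := sup{ Σ_{n=1}^N E_P[u_n(X^n+Y^n)] : Y^n ∈ ℒ^n and u_n(X^n+Y^n) P-integrable for every n, Σ_{n=1}^N E_{Q^n}[Y^n] ≤ A }; U_n(a) := sup{ E_P[u_n(X^n+Y)] : Y ∈ ℒ^n, u_n(X^n+Y) P-integrable, E_{Q^n}[Y] ≤ a } for a ∈ ℝ; and S := sup{ Σ_{n=1}^N U_n(a^n) : a ∈ ℝ^N, Σ_{n=1}^N a^n = A }. Then Π = S. -/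
import Mathlib


open MeasureTheory

private lemma ereal_coe_sum {ι : Type*} (s : Finset ι) (f : ι → ℝ) :
    ((∑ i ∈ s, f i : ℝ) : EReal) = ∑ i ∈ s, ((f i : ℝ) : EReal) := by
  induction s using Finset.cons_induction with
  | empty => simp
  | cons a s ha ih => simp [Finset.sum_cons, EReal.coe_add, ih]

/-- Key exchange lemma: a finite sum of suprema of sets of (coerced) reals is bounded by `b`
provided every simultaneous real selection has sum bounded by `b`. -/
private lemma ereal_sum_sSup_le {ι : Type*} [DecidableEq ι] (s : Finset ι)
    (T : ι → Set EReal) (b : EReal)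
    (hne : ∀ i ∈ s, ∃ x : ℝ, (x : EReal) ∈ T i)
    (hreal : ∀ i ∈ s, ∀ t ∈ T i, ∃ x : ℝ, t = (x : EReal))
    (hb : ∀ f : ι → ℝ, (∀ i ∈ s, ((f i : ℝ) : EReal) ∈ T i) →
      ((∑ i ∈ s, f i : ℝ) : EReal) ≤ b) :
    (∑ i ∈ s, sSup (T i)) ≤ b := by
  classical
  induction s using Finset.induction_on generalizing b with
  | empty => simpa using hb (fun _ => 0) (by simp)
  | @insert a s ha ih =>
    -- abbreviations
    have hmem : a ∈ insert a s := Finset.mem_insert_self a s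
    obtain ⟨x₀, hx₀⟩ := hne a hmem
    set C : EReal := ∑ i ∈ s, sSup (T i) with hC
    -- C is not ⊥
    have hCge : ∃ y : ℝ, (y : EReal) ≤ C := by
      choose g hg using fun i (hi : i ∈ s) => hne i (Finset.mem_insert_of_mem hi)
      refine ⟨∑ i ∈ s.attach, g i.1 i.2, ?_⟩
      have : ((∑ i ∈ s.attach, g i.1 i.2 : ℝ) : EReal)
          = ∑ i ∈ s.attach, ((g i.1 i.2 : ℝ) : EReal) := ereal_coe_sum _ _
      rw [this, hC, ← Finset.sum_attach s (fun i => sSup (T i))]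
      exact Finset.sum_le_sum fun i _ => le_sSup (hg i.1 i.2)
    obtain ⟨y₀, hy₀⟩ := hCge
    have hCbot : C ≠ ⊥ := fun h => by simp [h] at hy₀
    -- key pointwise bound: ∀ real x ∈ T a, ↑x + C ≤ b
    have key : ∀ x : ℝ, (x : EReal) ∈ T a → (x : EReal) + C ≤ b := by
      intro x hx
      have hC' : C ≤ b - (x : EReal) := by
        refine ih (b - (x : EReal)) (fun i hi => hne i (Finset.mem_insert_of_mem hi))
          (fun i hi => hreal i (Finset.mem_insert_of_mem hi)) ?_
        intro f hf
        have hmemf : ∀ i ∈ insert a s, (((Function.update f a x) i : ℝ) : EReal) ∈ T i := by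
          intro i hi
          rcases Finset.mem_insert.1 hi with rfl | hi'
          · simpa [Function.update_self] using hx
          · have hne' : i ≠ a := by rintro rfl; exact ha hi'
            simpa [Function.update_of_ne hne'] using hf i hi'
        have := hb _ hmemf
        rw [Finset.sum_insert ha, Function.update_self] at this
        have hsum : ∑ i ∈ s, Function.update f a x i = ∑ i ∈ s, f i :=
          Finset.sum_congr rfl fun i hi =>
            Function.update_of_ne (by rintro rfl; exact ha hi) _ _
        rw [hsum] at this
        rw [EReal.le_sub_iff_add_le (b := (x : EReal)) (c := b)
          (Or.inl (EReal.coe_ne_bot x)) (Or.inl (EReal.coe_ne_top x))]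
        calc ((∑ i ∈ s, f i : ℝ) : EReal) + (x : EReal)
            = ((x + ∑ i ∈ s, f i : ℝ) : EReal) := by
              rw [EReal.coe_add, add_comm]
          _ ≤ b := this
      have := (EReal.le_sub_iff_add_le (b := (x : EReal)) (c := b)
        (Or.inl (EReal.coe_ne_bot x)) (Or.inl (EReal.coe_ne_top x))).1 hC'
      rwa [add_comm] at this
    rw [Finset.sum_insert ha, ← hC]
    by_cases hCtop : C = ⊤
    · have : (x₀ : EReal) + C = ⊤ := by
        rw [hCtop]; exact EReal.add_top_of_ne_bot (EReal.coe_ne_bot x₀)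
      have hbtop : b = ⊤ := top_le_iff.1 (this ▸ key x₀ hx₀)
      simp [hbtop]
    · -- C is a real number
      lift C to ℝ using ⟨hCtop, hCbot⟩ with c hc
      have hsup : sSup (T a) ≤ b - (c : EReal) := by
        refine sSup_le fun t ht => ?_
        obtain ⟨x, rfl⟩ := hreal a hmem t ht
        exact (EReal.le_sub_iff_add_le (b := (c : EReal)) (c := b)
          (Or.inl (EReal.coe_ne_bot c)) (Or.inl (EReal.coe_ne_top c))).2 (key x ht)
      exact (EReal.le_sub_iff_add_le (b := (c : EReal)) (c := b)
        (Or.inl (EReal.coe_ne_bot c)) (Or.inl (EReal.coe_ne_top c))).1 hsup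

/-- Lemma 4.10: the systemic utility maximization problem `Π^Q(A)` under the overall
    budget constraint `Σₙ E_{Q^n}[Y^n] ≤ A` equals `S^Q(A)`, the supremum over
    deterministic allocations `a` with `Σₙ aⁿ = A` of the sum of the single-agent
    optimal values with budgets `aⁿ`. Suprema are taken in `ℝ ∪ {±∞}`. -/
theorem systemic_sup_eq_allocation_sup
    {Ω : Type*} [MeasurableSpace Ω] (P : Measure Ω) [IsProbabilityMeasure P]
    (N : ℕ) (hN : 1 ≤ N)
    (Q : Fin N → Measure Ω) [∀ n, IsProbabilityMeasure (Q n)]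
    (hQP : ∀ n, Q n ≪ P)
    (L : Fin N → Set (Ω → ℝ))
    (hLconst : ∀ n (c : ℝ), (fun _ => c) ∈ L n)
    (hLadd : ∀ n, ∀ Y ∈ L n, ∀ Z ∈ L n, Y + Z ∈ L n)
    (hLsmul : ∀ n (c : ℝ), ∀ Y ∈ L n, c • Y ∈ L n)
    (hLint : ∀ n, ∀ Y ∈ L n, Integrable Y (Q n))
    (u : Fin N → ℝ → ℝ) (hu : ∀ n, Measurable (u n))
    (A : ℝ) (X : Fin N → Ω → ℝ)
    (hXc : ∀ n (c : ℝ), Integrable (fun ω => u n (X n ω + c)) P) :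
    sSup {r : EReal | ∃ Y : Fin N → Ω → ℝ, (∀ n, Y n ∈ L n) ∧
        (∀ n, Integrable (fun ω => u n (X n ω + Y n ω)) P) ∧
        (∑ n, ∫ ω, Y n ω ∂(Q n)) ≤ A ∧
        r = ((∑ n, ∫ ω, u n (X n ω + Y n ω) ∂P : ℝ) : EReal)} =
    sSup {r : EReal | ∃ a : Fin N → ℝ, (∑ n, a n) = A ∧
        r = ∑ n, sSup {s : EReal | ∃ Y ∈ L n,
          Integrable (fun ω => u n (X n ω + Y ω)) P ∧
          (∫ ω, Y ω ∂(Q n)) ≤ a n ∧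
          s = ((∫ ω, u n (X n ω + Y ω) ∂P : ℝ) : EReal)}} := by
  classical
  -- single-agent feasible value sets
  set T : Fin N → ℝ → Set EReal := fun n an =>
    {s : EReal | ∃ Y ∈ L n,
      Integrable (fun ω => u n (X n ω + Y ω)) P ∧
      (∫ ω, Y ω ∂(Q n)) ≤ an ∧
      s = ((∫ ω, u n (X n ω + Y ω) ∂P : ℝ) : EReal)} with hT
  apply le_antisymm
  · -- Π ≤ S
    refine sSup_le fun r hr => ?_
    obtain ⟨Y, hYL, hYint, hbud, rfl⟩ := hr
    set i0 : Fin N := ⟨0, hN⟩ with hi0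
    set S : ℝ := ∑ n, ∫ ω, Y n ω ∂(Q n) with hS
    set a : Fin N → ℝ := fun n =>
      (∫ ω, Y n ω ∂(Q n)) + (if n = i0 then A - S else 0) with ha
    have hasum : (∑ n, a n) = A := by
      rw [ha]
      rw [Finset.sum_add_distrib, Finset.sum_ite_eq' Finset.univ i0
        (fun _ => A - S)]
      simp [← hS]
    have haY : ∀ n, (∫ ω, Y n ω ∂(Q n)) ≤ a n := by
      intro n
      show (∫ ω, Y n ω ∂(Q n)) ≤ (∫ ω, Y n ω ∂(Q n)) + (if n = i0 then A - S else 0)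
      have h0 : (0:ℝ) ≤ (if n = i0 then A - S else 0) := by
        by_cases h : n = i0 <;> simp [h] <;> linarith [hbud]
      linarith
    have hval : ∀ n, ((∫ ω, u n (X n ω + Y n ω) ∂P : ℝ) : EReal) ≤ sSup (T n (a n)) := by
      intro n
      exact le_sSup ⟨Y n, hYL n, hYint n, haY n, rfl⟩
    calc ((∑ n, ∫ ω, u n (X n ω + Y n ω) ∂P : ℝ) : EReal)
        = ∑ n, ((∫ ω, u n (X n ω + Y n ω) ∂P : ℝ) : EReal) := ereal_coe_sum _ _
      _ ≤ ∑ n, sSup (T n (a n)) := Finset.sum_le_sum fun n _ => hval n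
      _ ≤ sSup {r : EReal | ∃ a' : Fin N → ℝ, (∑ n, a' n) = A ∧
            r = ∑ n, sSup (T n (a' n))} := le_sSup ⟨a, hasum, rfl⟩
  · -- S ≤ Π
    refine sSup_le fun r hr => ?_
    obtain ⟨a, hasum, rfl⟩ := hr
    refine ereal_sum_sSup_le Finset.univ (fun n => T n (a n)) _ ?_ ?_ ?_
    · intro n _
      refine ⟨∫ ω, u n (X n ω + a n) ∂P, fun _ => a n, hLconst n (a n), hXc n (a n), ?_, rfl⟩
      simp
    · rintro n _ t ⟨Yn, _, _, _, rfl⟩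
      exact ⟨_, rfl⟩
    · intro f hf
      choose Y hYL hYint hYbud hYval using fun n => hf n (Finset.mem_univ n)
      have hfval : ∀ n, f n = ∫ ω, u n (X n ω + Y n ω) ∂P := by
        intro n
        exact_mod_cast hYval n
      refine le_sSup ⟨Y, hYL, hYint, ?_, ?_⟩
      · calc (∑ n, ∫ ω, Y n ω ∂(Q n)) ≤ ∑ n, a n :=
              Finset.sum_le_sum fun n _ => hYbud n
          _ = A := hasum
      · congr 1
        exact Finset.sum_congr rfl fun n _ => hfval n
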